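/- Let X be a T1 topological space and 𝒜,ℬ ⊆ ℘(X), where every member of 𝒜 is a proper subset of X. Consider the generalized point-open game: in round n One picks A_n ∈ 𝒜, Two responds with an open set U_n ⊆ X with A_n ⊆ U_n and U_n ≠ X, and One wins iff every B ∈ ℬ is contained in some U_n. Then One has a winning predetermined strategy (a sequence ⟨A_n : n ∈ ω⟩ in 𝒜 such that One wins against every legal sequence of responses) if and only if there is a countable family {A_n : n ∈ ω} ⊆ 𝒜 such that every B ∈ ℬ is contained in some A_n (i.e., cof(𝒜;ℬ,⊆) ≤ ω). -/

import Mathlib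

open Set

/-- For a T1 space `X` and `𝒜, ℬ ⊆ ℘(X)` with every member of `𝒜` proper,
in the generalized point-open game (One plays `A_n ∈ 𝒜`, Two responds with a proper open
`U_n ⊇ A_n`, One wins iff every `B ∈ ℬ` is contained in some `U_n`):
One has a winning predetermined strategy iff there is a countable family
`{A_n : n ∈ ω} ⊆ 𝒜` such that every `B ∈ ℬ` is contained in some `A_n`
(i.e. `cof(𝒜; ℬ, ⊆) ≤ ω`). -/
theorem stmt16 {X : Type*} [TopologicalSpace X] [T1Space X]
    (𝒜 ℬ : Set (Set X)) (hproper : ∀ A ∈ 𝒜, A ≠ univ) :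
    (∃ p : ℕ → Set X, (∀ n, p n ∈ 𝒜) ∧
      ∀ U : ℕ → Set X, (∀ n, IsOpen (U n) ∧ p n ⊆ U n ∧ U n ≠ univ) →
        ∀ B ∈ ℬ, ∃ n, B ⊆ U n) ↔
    (∃ A : ℕ → Set X, (∀ n, A n ∈ 𝒜) ∧ ∀ B ∈ ℬ, ∃ n, B ⊆ A n) := by
  constructor
  · rintro ⟨p, hpA, hwin⟩
    refine ⟨p, hpA, fun B hB => ?_⟩
    by_contra h
    push_neg at h
    have hx : ∀ n, ∃ x, x ∈ B ∧ x ∉ p n := by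
      intro n
      rcases not_subset.mp (h n) with ⟨x, hxB, hxp⟩
      exact ⟨x, hxB, hxp⟩
    choose x hxB hxp using hx
    have := hwin (fun n => {x n}ᶜ) (fun n =>
      ⟨isOpen_compl_singleton, fun y hy hyx => hxp n (hyx ▸ hy),
        fun huniv => by
          have : x n ∈ ({x n}ᶜ : Set X) := by rw [huniv]; exact mem_univ _
          exact this rfl⟩) B hB
    rcases this with ⟨n, hn⟩
    exact hn (hxB n) rfl
  · rintro ⟨A, hA, hcov⟩
    refine ⟨A, hA, fun U hU B hB => ?_⟩
    rcases hcov B hB with ⟨n, hn⟩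
    exact ⟨n, hn.trans (hU n).2.1⟩
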